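/- If N = (N_2, N_3) with N_2 ⊄ N_3 and N_3 ⊄ N_2 (N not a nest, ℓ = 3), then the cone over the N-Ish arrangement in K^4 is not free. -/

import Mathlib

set_option linter.unusedSectionVars false
set_option linter.unusedVariables false


open MvPolynomial

noncomputable section

def logDer (K : Type*) [CommRing K] {σ : Type*} (A : Set (MvPolynomial σ K)) :
    Submodule (MvPolynomial σ K)
      (Derivation K (MvPolynomial σ K) (MvPolynomial σ K)) where
  carrier := {θ | ∀ α ∈ A, θ α ∈ Ideal.span {α}}
  add_mem' := by
    intro θ η hθ hη α hα
    simpa using Ideal.add_mem _ (hθ α hα) (hη α hα)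
  zero_mem' := by intro α hα; simp
  smul_mem' := by
    intro r θ hθ α hα
    simpa [smul_eq_mul] using Ideal.mul_mem_left _ r (hθ α hα)

/-- The defining linear forms of the cone over the `N`-Ish arrangement.
Variables: `some 0` is `x₁`, `some i.succ` is `x_{i+2}` for `i : Fin n`, `none` is `z`,
so the ambient space is `K^{ℓ+1}` with `ℓ = n+1`, and `N j` is `N_{j+2}`. -/
def coneIsh {K : Type*} [CommRing K] (n : ℕ) (N : Fin n → Finset K) :
    Set (MvPolynomial (Option (Fin (n + 1))) K) :=
  {X none} ∪
    {p | ∃ i j : Fin n, i < j ∧ p = X (some i.succ) - X (some j.succ)} ∪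
    {p | ∃ j : Fin n, ∃ a ∈ N j, p = X (some 0) - X (some j.succ) - C a * X none}


namespace ConeIshProof

variable {K : Type*} [Field K] [DecidableEq K]

def e4 : Option (Fin 3) ≃ Fin 4 :=
  (_root_.finSuccEquiv 3).symm.trans (Equiv.swap 0 1)

def Phi : MvPolynomial (Option (Fin 3)) K ≃ₐ[K] Polynomial (MvPolynomial (Fin 3) K) :=
  (renameEquiv K e4).trans (MvPolynomial.finSuccEquiv K 3)

lemma e4_some0 : e4 (some 0) = 0 := by decide
lemma e4_some1 : e4 (some 1) = 2 := by decide
lemma e4_some2 : e4 (some 2) = 3 := by decide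
lemma e4_none : e4 none = 1 := by decide

lemma Phi_apply (p : MvPolynomial (Option (Fin 3)) K) :
    Phi p = (MvPolynomial.finSuccEquiv K 3) ((renameEquiv K e4) p) := rfl

lemma Phi_X1 : Phi (K := K) (X (some 0)) = Polynomial.X := by
  rw [Phi_apply, renameEquiv_apply, rename_X, e4_some0, finSuccEquiv_X_zero]

lemma Phi_X2 : Phi (K := K) (X (some 1)) = Polynomial.C (X 1) := by
  rw [Phi_apply, renameEquiv_apply, rename_X, e4_some1,
    show (2 : Fin 4) = Fin.succ 1 from by decide, finSuccEquiv_X_succ]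

lemma Phi_X3 : Phi (K := K) (X (some 2)) = Polynomial.C (X 2) := by
  rw [Phi_apply, renameEquiv_apply, rename_X, e4_some2,
    show (3 : Fin 4) = Fin.succ 2 from by decide, finSuccEquiv_X_succ]

lemma Phi_z : Phi (K := K) (X none) = Polynomial.C (X 0) := by
  rw [Phi_apply, renameEquiv_apply, rename_X, e4_none,
    show (1 : Fin 4) = Fin.succ 0 from by decide, finSuccEquiv_X_succ]

lemma Phi_C (a : K) : Phi (C a) = Polynomial.C (C a) := by
  rw [show (C a : MvPolynomial (Option (Fin 3)) K) = algebraMap K _ a from rfl,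
    AlgEquiv.commutes]
  rfl

def ell2 (a : K) : MvPolynomial (Option (Fin 3)) K :=
  X (some 0) - X (some 1) - C a * X none

def ell3 (a : K) : MvPolynomial (Option (Fin 3)) K :=
  X (some 0) - X (some 2) - C a * X none

def vv : MvPolynomial (Option (Fin 3)) K := X (some 1) - X (some 2)

lemma prime_ell2 (a : K) : Prime (ell2 a) := by
  refine (MulEquiv.prime_iff Phi.toMulEquiv).1 ?_
  have h : Phi (ell2 a) = Polynomial.X - Polynomial.C (X 1 + C a * X 0) := by
    simp only [ell2, map_sub, map_mul, Phi_X1, Phi_X2, Phi_z, Phi_C,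
      Polynomial.C_add, Polynomial.C_mul]
    ring
  rw [show (Phi.toMulEquiv : MvPolynomial (Option (Fin 3)) K → _) = Phi from rfl, h]
  exact Polynomial.prime_X_sub_C _

lemma prime_ell3 (a : K) : Prime (ell3 a) := by
  refine (MulEquiv.prime_iff Phi.toMulEquiv).1 ?_
  have h : Phi (ell3 a) = Polynomial.X - Polynomial.C (X 2 + C a * X 0) := by
    simp only [ell3, map_sub, map_mul, Phi_X1, Phi_X3, Phi_z, Phi_C,
      Polynomial.C_add, Polynomial.C_mul]
    ring
  rw [show (Phi.toMulEquiv : MvPolynomial (Option (Fin 3)) K → _) = Phi from rfl, h]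
  exact Polynomial.prime_X_sub_C _

def pt (c : K) : Option (Fin 3) → K := fun o => if o = some 0 then c else if o = none then 1 else 0

lemma eval_pt_ell2 (c a : K) : eval (pt c) (ell2 a) = c - a := by
  simp [ell2, pt]

lemma eval_pt_ell3 (c a : K) : eval (pt c) (ell3 a) = c - a := by
  simp [ell3, pt]

lemma not_dvd_ell2 {a b : K} (h : a ≠ b) : ¬ ell2 a ∣ ell2 b := by
  rintro ⟨c, hc⟩
  have h0 := congrArg (eval (pt a)) hc
  rw [map_mul, eval_pt_ell2, eval_pt_ell2, sub_self, zero_mul, sub_eq_zero] at h0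
  exact h h0

lemma not_dvd_ell3 {a b : K} (h : a ≠ b) : ¬ ell3 a ∣ ell3 b := by
  rintro ⟨c, hc⟩
  have h0 := congrArg (eval (pt a)) hc
  rw [map_mul, eval_pt_ell3, eval_pt_ell3, sub_self, zero_mul, sub_eq_zero] at h0
  exact h h0

lemma vv_ne_zero : (vv : MvPolynomial (Option (Fin 3)) K) ≠ 0 := by
  intro h
  have h0 := congrArg (eval (fun o => if o = some 1 then (1 : K) else 0)) h
  simp [vv] at h0

lemma z_ne_zero : (X none : MvPolynomial (Option (Fin 3)) K) ≠ 0 := by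
  intro h
  have h0 := congrArg (eval (fun o => if o = none then (1 : K) else 0)) h
  simp at h0

/-- product of pairwise non-associate primes each dividing q divides q -/
lemma prod_primes_dvd {ι : Type*} (s : Finset ι) (f : ι → MvPolynomial (Option (Fin 3)) K)
    (q : MvPolynomial (Option (Fin 3)) K)
    (hp : ∀ i ∈ s, Prime (f i)) (hnd : ∀ i ∈ s, ∀ j ∈ s, i ≠ j → ¬ f i ∣ f j)
    (h : ∀ i ∈ s, f i ∣ q) : (∏ i ∈ s, f i) ∣ q := by
  classical
  revert hp hnd q h
  induction s using Finset.induction_on with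
  | empty => intro q _ _ _; simp
  | insert a s ha ih =>
    intro q hp hnd h
    obtain ⟨m, hm⟩ := h a (Finset.mem_insert_self a s)
    have hdm : ∀ i ∈ s, f i ∣ m := by
      intro i hi
      have hiq : f i ∣ f a * m := hm ▸ h i (Finset.mem_insert_of_mem hi)
      rcases (hp i (Finset.mem_insert_of_mem hi)).2.2 _ _ hiq with h' | h'
      · exact absurd h' (hnd i (Finset.mem_insert_of_mem hi) a (Finset.mem_insert_self a s)
          (fun hia => ha (hia ▸ hi)))
      · exact h'
    rw [Finset.prod_insert ha, hm]
    exact mul_dvd_mul_left _ (ih m (fun i hi => hp i (Finset.mem_insert_of_mem hi))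
      (fun i hi j hj hij => hnd i (Finset.mem_insert_of_mem hi) j (Finset.mem_insert_of_mem hj) hij)
      hdm)


/-- the substitution x₃ ↦ x₂ -/
def piS : MvPolynomial (Option (Fin 3)) K →ₐ[K] MvPolynomial (Option (Fin 3)) K :=
  aeval (fun o => if o = some 2 then X (some 1) else X o)

lemma piS_X1 : piS (K := K) (X (some 0)) = X (some 0) := by simp [piS]
lemma piS_X2 : piS (K := K) (X (some 1)) = X (some 1) := by simp [piS]
lemma piS_X3 : piS (K := K) (X (some 2)) = X (some 1) := by simp [piS]
lemma piS_z : piS (K := K) (X none) = X none := by simp [piS]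

lemma piS_vv : piS (K := K) vv = 0 := by
  simp [vv, map_sub, piS_X2, piS_X3]

lemma piS_ell2 (a : K) : piS (ell2 a) = ell2 a := by
  simp [ell2, map_sub, map_mul, piS_X1, piS_X2, piS_z, algebraMap_eq]

lemma piS_ell3 (a : K) : piS (ell3 a) = ell2 a := by
  simp [ell3, ell2, map_sub, map_mul, piS_X1, piS_X3, piS_z, algebraMap_eq]

lemma piS_piS (f : MvPolynomial (Option (Fin 3)) K) : piS (piS f) = piS f := by
  have h : (piS (K := K)).comp piS = piS := by
    apply MvPolynomial.algHom_ext
    intro i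
    rcases i with _ | i
    · simp [piS_z]
    · fin_cases i <;> simp [piS_X1, piS_X2, piS_X3]
  exact AlgHom.congr_fun h f

lemma X_sub_piS (i : Option (Fin 3)) : X i - piS (K := K) (X i) ∈ Ideal.span {vv} := by
  have h : ∀ j : Option (Fin 3), piS (K := K) (X j) = if j = some 2 then X (some 1) else X j := by
    intro j; simp [piS]
  rcases i with _ | i
  · simp [h]
  · by_cases hi : i = 2
    · subst hi
      rw [h, if_pos rfl,
        show (X (some 2) - X (some 1) : MvPolynomial (Option (Fin 3)) K) = -vv from by
          rw [vv]; ring]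
      exact neg_mem (Ideal.subset_span rfl)
    · rw [h, if_neg (by simpa using hi)]
      simp

lemma sub_piS_mem (f : MvPolynomial (Option (Fin 3)) K) :
    f - piS f ∈ Ideal.span {(vv : MvPolynomial (Option (Fin 3)) K)} := by
  induction f using MvPolynomial.induction_on with
  | C a => simp [piS, Ideal.zero_mem]
  | add p q hp hq =>
    have := Ideal.add_mem _ hp hq
    simpa [map_add, add_sub_add_comm] using this
  | mul_X p i hp =>
    have h1 : p * X i - piS (p * X i) =
        (p - piS p) * X i + piS p * (X i - piS (X i)) := by
      rw [map_mul]; ring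
    rw [h1]
    exact Ideal.add_mem _ (Ideal.mul_mem_right _ _ hp)
      (Ideal.mul_mem_left _ _ (X_sub_piS i))

lemma vv_dvd_iff (f : MvPolynomial (Option (Fin 3)) K) : vv ∣ f ↔ piS f = 0 := by
  constructor
  · rintro ⟨c, rfl⟩
    rw [map_mul, piS_vv, zero_mul]
  · intro h
    have := sub_piS_mem f
    rw [h, sub_zero, Ideal.mem_span_singleton] at this
    exact this

lemma mem_span_vv_iff (f : MvPolynomial (Option (Fin 3)) K) :
    f ∈ Ideal.span {(vv : MvPolynomial (Option (Fin 3)) K)} ↔ piS f = 0 := by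
  rw [Ideal.mem_span_singleton]; exact vv_dvd_iff f

section Products

variable (N2 N3 : Finset K)

def Ftwo : MvPolynomial (Option (Fin 3)) K := ∏ a ∈ N2, ell2 a
def Fthree : MvPolynomial (Option (Fin 3)) K := ∏ b ∈ N3, ell3 b
def Pp : MvPolynomial (Option (Fin 3)) K := ∏ a ∈ N2 \ N3, ell2 a
def Qp : MvPolynomial (Option (Fin 3)) K := ∏ b ∈ N3 \ N2, ell2 b
def Dp : MvPolynomial (Option (Fin 3)) K := ∏ c ∈ N2 ∩ N3, ell2 c

lemma Ftwo_ne_zero : Ftwo N2 ≠ 0 :=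
  Finset.prod_ne_zero_iff.2 (fun a _ => (prime_ell2 a).ne_zero)

lemma Fthree_ne_zero : Fthree N3 ≠ 0 :=
  Finset.prod_ne_zero_iff.2 (fun b _ => (prime_ell3 b).ne_zero)

lemma Qp_ne_zero : Qp N2 N3 ≠ 0 :=
  Finset.prod_ne_zero_iff.2 (fun b _ => (prime_ell2 b).ne_zero)

lemma Dp_ne_zero : Dp N2 N3 ≠ 0 :=
  Finset.prod_ne_zero_iff.2 (fun c _ => (prime_ell2 c).ne_zero)

lemma piS_Ftwo : piS (Ftwo N2) = Dp N2 N3 * Pp N2 N3 := by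
  classical
  rw [Ftwo, map_prod]
  simp_rw [piS_ell2]
  rw [Dp, Pp, Finset.prod_inter_mul_prod_diff]

lemma piS_Fthree : piS (Fthree N3) = Dp N2 N3 * Qp N2 N3 := by
  classical
  rw [Fthree, map_prod]
  simp_rw [piS_ell3]
  rw [Dp, Qp, ← Finset.prod_inter_mul_prod_diff N3 N2 (fun b => ell2 b), Finset.inter_comm]

lemma piS_Pp : piS (Pp N2 N3) = Pp N2 N3 := by
  rw [Pp, map_prod]; simp_rw [piS_ell2]

lemma piS_Qp : piS (Qp N2 N3) = Qp N2 N3 := by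
  rw [Qp, map_prod]; simp_rw [piS_ell2]

lemma constantCoeff_ell2 (a : K) : constantCoeff (ell2 a) = 0 := by
  simp [ell2]

lemma constantCoeff_Pp (h : ¬ N2 ⊆ N3) : constantCoeff (Pp N2 N3) = 0 := by
  obtain ⟨a, ha⟩ := Finset.sdiff_nonempty.2 h
  rw [Pp, map_prod]
  exact Finset.prod_eq_zero ha (constantCoeff_ell2 a)

lemma constantCoeff_Qp (h : ¬ N3 ⊆ N2) : constantCoeff (Qp N2 N3) = 0 := by
  obtain ⟨b, hb⟩ := Finset.sdiff_nonempty.2 h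
  rw [Qp, map_prod]
  exact Finset.prod_eq_zero hb (constantCoeff_ell2 b)

lemma constantCoeff_vv : constantCoeff (vv : MvPolynomial (Option (Fin 3)) K) = 0 := by
  simp [vv]

end Products


section Main

variable (N2 N3 : Finset K)

/-! ### Membership lemmas for the cone -/

lemma cone_z_mem : (X none : MvPolynomial (Option (Fin 3)) K) ∈ coneIsh 2 ![N2, N3] :=
  Or.inl (Or.inl rfl)

lemma cone_vv_mem : (vv : MvPolynomial (Option (Fin 3)) K) ∈ coneIsh 2 ![N2, N3] :=
  Or.inl (Or.inr ⟨0, 1, by decide, rfl⟩)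

lemma cone_ell2_mem {a : K} (ha : a ∈ N2) : ell2 a ∈ coneIsh 2 ![N2, N3] :=
  Or.inr ⟨0, a, by simpa using ha, rfl⟩

lemma cone_ell3_mem {b : K} (hb : b ∈ N3) : ell3 b ∈ coneIsh 2 ![N2, N3] :=
  Or.inr ⟨1, b, by simpa using hb, rfl⟩

lemma mem_logDer {A : Set (MvPolynomial (Option (Fin 3)) K)}
    {θ : Derivation K (MvPolynomial (Option (Fin 3)) K) (MvPolynomial (Option (Fin 3)) K)} :
    θ ∈ logDer K A ↔ ∀ α ∈ A, θ α ∈ Ideal.span {α} := Iff.rfl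

lemma deriv_ell2 (D : Derivation K (MvPolynomial (Option (Fin 3)) K)
    (MvPolynomial (Option (Fin 3)) K)) (a : K) :
    D (ell2 a) = D (X (some 0)) - D (X (some 1)) - C a * D (X none) := by
  rw [ell2, map_sub, map_sub, ← smul_eq_C_mul, Derivation.map_smul, smul_eq_C_mul]

lemma deriv_ell3 (D : Derivation K (MvPolynomial (Option (Fin 3)) K)
    (MvPolynomial (Option (Fin 3)) K)) (a : K) :
    D (ell3 a) = D (X (some 0)) - D (X (some 2)) - C a * D (X none) := by
  rw [ell3, map_sub, map_sub, ← smul_eq_C_mul, Derivation.map_smul, smul_eq_C_mul]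

/-! ### The module L -/

def Lmod : Submodule (MvPolynomial (Option (Fin 3)) K)
    (MvPolynomial (Option (Fin 3)) K × MvPolynomial (Option (Fin 3)) K) where
  carrier := {gh | Ftwo N2 * gh.1 - Fthree N3 * gh.2 ∈ Ideal.span {vv}}
  add_mem' := by
    intro x y hx hy
    have e : Ftwo N2 * (x + y).1 - Fthree N3 * (x + y).2 =
        (Ftwo N2 * x.1 - Fthree N3 * x.2) + (Ftwo N2 * y.1 - Fthree N3 * y.2) := by
      simp only [Prod.fst_add, Prod.snd_add]; ring
    show _ ∈ Ideal.span {vv}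
    rw [e]
    exact Ideal.add_mem _ hx hy
  zero_mem' := by simp
  smul_mem' := by
    intro r x hx
    have e : Ftwo N2 * (r • x).1 - Fthree N3 * (r • x).2 =
        r * (Ftwo N2 * x.1 - Fthree N3 * x.2) := by
      simp only [Prod.smul_fst, Prod.smul_snd, smul_eq_mul]; ring
    show _ ∈ Ideal.span {vv}
    rw [e]
    exact Ideal.mul_mem_left _ _ hx

lemma mem_Lmod_iff {gh : MvPolynomial (Option (Fin 3)) K × MvPolynomial (Option (Fin 3)) K} :
    gh ∈ Lmod N2 N3 ↔ Ftwo N2 * gh.1 - Fthree N3 * gh.2 ∈ Ideal.span {vv} := Iff.rfl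

/-! ### The derivation attached to a pair -/

def toDer (gh : MvPolynomial (Option (Fin 3)) K × MvPolynomial (Option (Fin 3)) K) :
    Derivation K (MvPolynomial (Option (Fin 3)) K) (MvPolynomial (Option (Fin 3)) K) :=
  mkDerivation K fun o =>
    if o = some 1 then -(Ftwo N2 * gh.1) else if o = some 2 then -(Fthree N3 * gh.2) else 0

variable {gh : MvPolynomial (Option (Fin 3)) K × MvPolynomial (Option (Fin 3)) K}

lemma toDer_X0 : toDer N2 N3 gh (X (some 0)) = 0 := by
  rw [toDer, mkDerivation_X,
    if_neg (by decide : ¬((some 0 : Option (Fin 3)) = some 1)),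
    if_neg (by decide : ¬((some 0 : Option (Fin 3)) = some 2))]

lemma toDer_X1 : toDer N2 N3 gh (X (some 1)) = -(Ftwo N2 * gh.1) := by
  rw [toDer, mkDerivation_X, if_pos rfl]

lemma toDer_X2 : toDer N2 N3 gh (X (some 2)) = -(Fthree N3 * gh.2) := by
  rw [toDer, mkDerivation_X,
    if_neg (by decide : ¬((some 2 : Option (Fin 3)) = some 1)), if_pos rfl]

lemma toDer_z : toDer N2 N3 gh (X none) = 0 := by
  rw [toDer, mkDerivation_X,
    if_neg (by decide : ¬((none : Option (Fin 3)) = some 1)),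
    if_neg (by decide : ¬((none : Option (Fin 3)) = some 2))]

lemma toDer_mem (hgh : gh ∈ Lmod N2 N3) : toDer N2 N3 gh ∈ logDer K (coneIsh 2 ![N2, N3]) := by
  rw [mem_logDer]
  intro α hα
  rcases hα with (h | h) | h
  · rw [Set.mem_singleton_iff] at h
    subst h
    rw [toDer_z]
    exact Ideal.zero_mem _
  · obtain ⟨i, j, hij, rfl⟩ := h
    fin_cases i <;> fin_cases j
    · exact absurd hij (by decide)
    · show toDer N2 N3 gh vv ∈ Ideal.span {vv}
      rw [vv, map_sub, toDer_X1, toDer_X2]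
      have e : -(Ftwo N2 * gh.1) - -(Fthree N3 * gh.2) =
          -(Ftwo N2 * gh.1 - Fthree N3 * gh.2) := by ring
      rw [e]
      exact neg_mem hgh
    · exact absurd hij (by decide)
    · exact absurd hij (by decide)
  · obtain ⟨j, a, ha, rfl⟩ := h
    fin_cases j
    · simp only [Matrix.cons_val_zero] at ha
      show toDer N2 N3 gh (ell2 a) ∈ Ideal.span {ell2 a}
      rw [deriv_ell2, toDer_X0, toDer_X1, toDer_z]
      have e : (0 : MvPolynomial (Option (Fin 3)) K) - -(Ftwo N2 * gh.1) - C a * 0 =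
          Ftwo N2 * gh.1 := by ring
      rw [e, Ideal.mem_span_singleton]
      exact dvd_mul_of_dvd_left (Finset.dvd_prod_of_mem _ ha) _
    · simp only [Matrix.cons_val_one, Matrix.head_cons] at ha
      show toDer N2 N3 gh (ell3 a) ∈ Ideal.span {ell3 a}
      rw [deriv_ell3, toDer_X0, toDer_X2, toDer_z]
      have e : (0 : MvPolynomial (Option (Fin 3)) K) - -(Fthree N3 * gh.2) - C a * 0 =
          Fthree N3 * gh.2 := by ring
      rw [e, Ideal.mem_span_singleton]
      exact dvd_mul_of_dvd_left (Finset.dvd_prod_of_mem _ ha) _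

lemma toDer_add (x y : MvPolynomial (Option (Fin 3)) K × MvPolynomial (Option (Fin 3)) K) :
    toDer N2 N3 (x + y) = toDer N2 N3 x + toDer N2 N3 y := by
  apply derivation_ext
  intro i
  rw [Derivation.add_apply, toDer, toDer, toDer, mkDerivation_X, mkDerivation_X, mkDerivation_X]
  split_ifs
  all_goals (try simp only [Prod.fst_add, Prod.snd_add])
  all_goals ring

lemma toDer_smul (r : MvPolynomial (Option (Fin 3)) K)
    (x : MvPolynomial (Option (Fin 3)) K × MvPolynomial (Option (Fin 3)) K) :
    toDer N2 N3 (r • x) = r • toDer N2 N3 x := by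
  apply derivation_ext
  intro i
  rw [Derivation.smul_apply, toDer, toDer, mkDerivation_X, mkDerivation_X]
  split_ifs
  all_goals (try simp only [Prod.smul_fst, Prod.smul_snd, smul_eq_mul])
  all_goals ring

def imap : Lmod N2 N3 →ₗ[MvPolynomial (Option (Fin 3)) K] logDer K (coneIsh 2 ![N2, N3]) where
  toFun x := ⟨toDer N2 N3 x.1, toDer_mem N2 N3 x.2⟩
  map_add' x y := Subtype.ext (by
    show toDer N2 N3 (x + y : Lmod N2 N3).1 = _
    rw [Submodule.coe_add, toDer_add]; rfl)
  map_smul' r x := Subtype.ext (by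
    show toDer N2 N3 (r • x : Lmod N2 N3).1 = _
    rw [Submodule.coe_smul, toDer_smul]; rfl)


/-! ### Division helper -/

open Classical in
def divAux (d f : MvPolynomial (Option (Fin 3)) K) : MvPolynomial (Option (Fin 3)) K :=
  if h : d ∣ f then h.choose else 0

lemma divAux_spec {d f : MvPolynomial (Option (Fin 3)) K} (h : d ∣ f) :
    d * divAux d f = f := by
  rw [divAux]
  rw [dif_pos h]
  exact h.choose_spec.symm

lemma divAux_eq {d : MvPolynomial (Option (Fin 3)) K} (hd : d ≠ 0)
    {f q : MvPolynomial (Option (Fin 3)) K} (h : f = d * q) : divAux d f = q := by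
  have hdvd : d ∣ f := ⟨q, h⟩
  apply mul_left_cancel₀ hd
  rw [divAux_spec hdvd, h]

/-! ### Components of a logarithmic derivation -/

abbrev DerK := Derivation K (MvPolynomial (Option (Fin 3)) K) (MvPolynomial (Option (Fin 3)) K)

def sTil (θ : DerK (K := K)) : MvPolynomial (Option (Fin 3)) K := divAux (X none) (θ (X none))

def q2 (θ : DerK (K := K)) : MvPolynomial (Option (Fin 3)) K :=
  θ (X (some 0)) - θ (X (some 1)) - sTil θ * (X (some 0) - X (some 1))

def q3 (θ : DerK (K := K)) : MvPolynomial (Option (Fin 3)) K :=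
  θ (X (some 0)) - θ (X (some 2)) - sTil θ * (X (some 0) - X (some 2))

def gComp (θ : DerK (K := K)) : MvPolynomial (Option (Fin 3)) K := divAux (Ftwo N2) (q2 θ)

def hComp (θ : DerK (K := K)) : MvPolynomial (Option (Fin 3)) K := divAux (Fthree N3) (q3 θ)

variable {N2 N3}

section Members

variable {θ η : DerK (K := K)}

lemma z_mul_sTil (hθ : θ ∈ logDer K (coneIsh 2 ![N2, N3])) :
    X none * sTil θ = θ (X none) :=
  divAux_spec (Ideal.mem_span_singleton.1 (hθ _ (cone_z_mem N2 N3)))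

lemma ell2_dvd_q2 (hθ : θ ∈ logDer K (coneIsh 2 ![N2, N3])) {a : K} (ha : a ∈ N2) :
    ell2 a ∣ q2 θ := by
  have h := Ideal.mem_span_singleton.1 (hθ _ (cone_ell2_mem N2 N3 ha))
  rw [deriv_ell2] at h
  have e : q2 θ = (θ (X (some 0)) - θ (X (some 1)) - C a * θ (X none)) - sTil θ * ell2 a := by
    rw [q2, ell2, ← z_mul_sTil hθ]; ring
  rw [e]
  exact dvd_sub h (Dvd.intro_left _ rfl)

lemma ell3_dvd_q3 (hθ : θ ∈ logDer K (coneIsh 2 ![N2, N3])) {b : K} (hb : b ∈ N3) :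
    ell3 b ∣ q3 θ := by
  have h := Ideal.mem_span_singleton.1 (hθ _ (cone_ell3_mem N2 N3 hb))
  rw [deriv_ell3] at h
  have e : q3 θ = (θ (X (some 0)) - θ (X (some 2)) - C b * θ (X none)) - sTil θ * ell3 b := by
    rw [q3, ell3, ← z_mul_sTil hθ]; ring
  rw [e]
  exact dvd_sub h (Dvd.intro_left _ rfl)

lemma Ftwo_dvd_q2 (hθ : θ ∈ logDer K (coneIsh 2 ![N2, N3])) : Ftwo N2 ∣ q2 θ :=
  prod_primes_dvd N2 ell2 (q2 θ) (fun a _ => prime_ell2 a)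
    (fun a _ b _ hab => not_dvd_ell2 hab) (fun a ha => ell2_dvd_q2 hθ ha)

lemma Fthree_dvd_q3 (hθ : θ ∈ logDer K (coneIsh 2 ![N2, N3])) : Fthree N3 ∣ q3 θ :=
  prod_primes_dvd N3 ell3 (q3 θ) (fun b _ => prime_ell3 b)
    (fun a _ b _ hab => not_dvd_ell3 hab) (fun b hb => ell3_dvd_q3 hθ hb)

lemma Ftwo_mul_gComp (hθ : θ ∈ logDer K (coneIsh 2 ![N2, N3])) :
    Ftwo N2 * gComp N2 θ = q2 θ := divAux_spec (Ftwo_dvd_q2 hθ)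

lemma Fthree_mul_hComp (hθ : θ ∈ logDer K (coneIsh 2 ![N2, N3])) :
    Fthree N3 * hComp N3 θ = q3 θ := divAux_spec (Fthree_dvd_q3 hθ)

lemma pair_mem_Lmod (hθ : θ ∈ logDer K (coneIsh 2 ![N2, N3])) :
    (gComp N2 θ, hComp N3 θ) ∈ Lmod N2 N3 := by
  rw [mem_Lmod_iff]
  show Ftwo N2 * gComp N2 θ - Fthree N3 * hComp N3 θ ∈ _
  rw [Ftwo_mul_gComp hθ, Fthree_mul_hComp hθ]
  have hv := hθ _ (cone_vv_mem N2 N3)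
  rw [show (vv : MvPolynomial (Option (Fin 3)) K) = X (some 1) - X (some 2) from rfl,
    map_sub] at hv
  have e : q2 θ - q3 θ = -(θ (X (some 1)) - θ (X (some 2))) + sTil θ * vv := by
    rw [q2, q3, vv]; ring
  rw [e]
  exact Ideal.add_mem _ (neg_mem hv) (Ideal.mul_mem_left _ _ (Ideal.subset_span rfl))

lemma sTil_add (hθ : θ ∈ logDer K (coneIsh 2 ![N2, N3]))
    (hη : η ∈ logDer K (coneIsh 2 ![N2, N3])) : sTil (θ + η) = sTil θ + sTil η := by
  apply divAux_eq z_ne_zero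
  rw [Derivation.add_apply, ← z_mul_sTil hθ, ← z_mul_sTil hη]; ring

lemma sTil_smul (r : MvPolynomial (Option (Fin 3)) K)
    (hθ : θ ∈ logDer K (coneIsh 2 ![N2, N3])) : sTil (r • θ) = r * sTil θ := by
  apply divAux_eq z_ne_zero
  rw [Derivation.smul_apply, smul_eq_mul, ← z_mul_sTil hθ]; ring

lemma gComp_add (hθ : θ ∈ logDer K (coneIsh 2 ![N2, N3]))
    (hη : η ∈ logDer K (coneIsh 2 ![N2, N3])) :
    gComp N2 (θ + η) = gComp N2 θ + gComp N2 η := by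
  apply divAux_eq (Ftwo_ne_zero N2)
  have e : q2 (θ + η) = q2 θ + q2 η := by
    rw [q2, q2, q2, sTil_add hθ hη, Derivation.add_apply, Derivation.add_apply]; ring
  rw [e, ← Ftwo_mul_gComp hθ, ← Ftwo_mul_gComp hη, mul_add]

lemma hComp_add (hθ : θ ∈ logDer K (coneIsh 2 ![N2, N3]))
    (hη : η ∈ logDer K (coneIsh 2 ![N2, N3])) :
    hComp N3 (θ + η) = hComp N3 θ + hComp N3 η := by
  apply divAux_eq (Fthree_ne_zero N3)
  have e : q3 (θ + η) = q3 θ + q3 η := by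
    rw [q3, q3, q3, sTil_add hθ hη, Derivation.add_apply, Derivation.add_apply]; ring
  rw [e, ← Fthree_mul_hComp hθ, ← Fthree_mul_hComp hη, mul_add]

lemma gComp_smul (r : MvPolynomial (Option (Fin 3)) K)
    (hθ : θ ∈ logDer K (coneIsh 2 ![N2, N3])) :
    gComp N2 (r • θ) = r * gComp N2 θ := by
  apply divAux_eq (Ftwo_ne_zero N2)
  have e : q2 (r • θ) = r * q2 θ := by
    rw [q2, q2, sTil_smul r hθ, Derivation.smul_apply, Derivation.smul_apply, smul_eq_mul,
      smul_eq_mul]; ring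
  rw [e, ← Ftwo_mul_gComp hθ]; ring

lemma hComp_smul (r : MvPolynomial (Option (Fin 3)) K)
    (hθ : θ ∈ logDer K (coneIsh 2 ![N2, N3])) :
    hComp N3 (r • θ) = r * hComp N3 θ := by
  apply divAux_eq (Fthree_ne_zero N3)
  have e : q3 (r • θ) = r * q3 θ := by
    rw [q3, q3, sTil_smul r hθ, Derivation.smul_apply, Derivation.smul_apply, smul_eq_mul,
      smul_eq_mul]; ring
  rw [e, ← Fthree_mul_hComp hθ]; ring

end Members

variable (N2 N3)

def pmap : logDer K (coneIsh 2 ![N2, N3]) →ₗ[MvPolynomial (Option (Fin 3)) K] Lmod N2 N3 where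
  toFun θ := ⟨(gComp N2 θ.1, hComp N3 θ.1), pair_mem_Lmod θ.2⟩
  map_add' θ η := Subtype.ext (by
    have h1 : ((θ + η : logDer K (coneIsh 2 ![N2, N3])) : DerK (K := K)) = θ.1 + η.1 := rfl
    show (gComp N2 (θ + η : logDer K (coneIsh 2 ![N2, N3])).1,
      hComp N3 (θ + η : logDer K (coneIsh 2 ![N2, N3])).1) = _
    rw [h1, gComp_add θ.2 η.2, hComp_add θ.2 η.2]
    rfl)
  map_smul' r θ := Subtype.ext (by
    have h1 : ((r • θ : logDer K (coneIsh 2 ![N2, N3])) : DerK (K := K)) = r • θ.1 := rfl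
    show (gComp N2 (r • θ : logDer K (coneIsh 2 ![N2, N3])).1,
      hComp N3 (r • θ : logDer K (coneIsh 2 ![N2, N3])).1) = _
    rw [h1, gComp_smul r θ.2, hComp_smul r θ.2]
    rfl)

lemma pmap_comp_imap : (pmap N2 N3).comp (imap N2 N3) = LinearMap.id := by
  apply LinearMap.ext
  intro x
  apply Subtype.ext
  have hs : sTil (toDer N2 N3 x.1) = 0 := by
    apply divAux_eq z_ne_zero
    rw [toDer_z, mul_zero]
  have hg : gComp N2 (toDer N2 N3 x.1) = x.1.1 := by
    apply divAux_eq (Ftwo_ne_zero N2)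
    rw [q2, hs, toDer_X0, toDer_X1]; ring
  have hh : hComp N3 (toDer N2 N3 x.1) = x.1.2 := by
    apply divAux_eq (Fthree_ne_zero N3)
    rw [q3, hs, toDer_X0, toDer_X2]; ring
  show (gComp N2 (toDer N2 N3 x.1), hComp N3 (toDer N2 N3 x.1)) = x.1
  rw [hg, hh]


/-! ### The presentation map -/

def proj1 : (MvPolynomial (Option (Fin 3)) K × MvPolynomial (Option (Fin 3)) K ×
    MvPolynomial (Option (Fin 3)) K) →ₗ[MvPolynomial (Option (Fin 3)) K]
    MvPolynomial (Option (Fin 3)) K :=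
  LinearMap.fst (MvPolynomial (Option (Fin 3)) K) (MvPolynomial (Option (Fin 3)) K)
    (MvPolynomial (Option (Fin 3)) K × MvPolynomial (Option (Fin 3)) K)

def proj2 : (MvPolynomial (Option (Fin 3)) K × MvPolynomial (Option (Fin 3)) K ×
    MvPolynomial (Option (Fin 3)) K) →ₗ[MvPolynomial (Option (Fin 3)) K]
    MvPolynomial (Option (Fin 3)) K :=
  (LinearMap.fst (MvPolynomial (Option (Fin 3)) K) (MvPolynomial (Option (Fin 3)) K)
      (MvPolynomial (Option (Fin 3)) K)).comp
    (LinearMap.snd (MvPolynomial (Option (Fin 3)) K) (MvPolynomial (Option (Fin 3)) K)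
      (MvPolynomial (Option (Fin 3)) K × MvPolynomial (Option (Fin 3)) K))

def proj3 : (MvPolynomial (Option (Fin 3)) K × MvPolynomial (Option (Fin 3)) K ×
    MvPolynomial (Option (Fin 3)) K) →ₗ[MvPolynomial (Option (Fin 3)) K]
    MvPolynomial (Option (Fin 3)) K :=
  (LinearMap.snd (MvPolynomial (Option (Fin 3)) K) (MvPolynomial (Option (Fin 3)) K)
      (MvPolynomial (Option (Fin 3)) K)).comp
    (LinearMap.snd (MvPolynomial (Option (Fin 3)) K) (MvPolynomial (Option (Fin 3)) K)
      (MvPolynomial (Option (Fin 3)) K × MvPolynomial (Option (Fin 3)) K))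

def p3raw : (MvPolynomial (Option (Fin 3)) K × MvPolynomial (Option (Fin 3)) K ×
      MvPolynomial (Option (Fin 3)) K) →ₗ[MvPolynomial (Option (Fin 3)) K]
      (MvPolynomial (Option (Fin 3)) K × MvPolynomial (Option (Fin 3)) K) :=
  LinearMap.prod ((vv : MvPolynomial (Option (Fin 3)) K) • proj1 (K := K) +
      Qp N2 N3 • proj3 (K := K))
    ((vv : MvPolynomial (Option (Fin 3)) K) • proj2 (K := K) + Pp N2 N3 • proj3 (K := K))

lemma p3raw_apply (c : MvPolynomial (Option (Fin 3)) K × MvPolynomial (Option (Fin 3)) K ×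
    MvPolynomial (Option (Fin 3)) K) :
    p3raw N2 N3 c = (vv * c.1 + Qp N2 N3 * c.2.2, vv * c.2.1 + Pp N2 N3 * c.2.2) := by
  simp [p3raw, proj1, proj2, proj3, LinearMap.prod_apply, LinearMap.add_apply,
    LinearMap.smul_apply, LinearMap.comp_apply, LinearMap.fst_apply, LinearMap.snd_apply,
    smul_eq_mul]

lemma p3raw_mem (c : MvPolynomial (Option (Fin 3)) K × MvPolynomial (Option (Fin 3)) K ×
    MvPolynomial (Option (Fin 3)) K) : p3raw N2 N3 c ∈ Lmod N2 N3 := by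
  rw [p3raw_apply, mem_Lmod_iff]
  rw [mem_span_vv_iff]
  rw [map_sub, map_mul, map_mul, map_add, map_add, map_mul, map_mul, map_mul, map_mul,
    piS_vv, piS_Ftwo N2 N3, piS_Fthree N2 N3, piS_Pp, piS_Qp]
  ring

def p3map : (MvPolynomial (Option (Fin 3)) K × MvPolynomial (Option (Fin 3)) K ×
      MvPolynomial (Option (Fin 3)) K) →ₗ[MvPolynomial (Option (Fin 3)) K] Lmod N2 N3 :=
  LinearMap.codRestrict (Lmod N2 N3) (p3raw N2 N3) (p3raw_mem N2 N3)

lemma p3map_apply (c : MvPolynomial (Option (Fin 3)) K × MvPolynomial (Option (Fin 3)) K ×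
    MvPolynomial (Option (Fin 3)) K) :
    (p3map N2 N3 c : MvPolynomial (Option (Fin 3)) K × MvPolynomial (Option (Fin 3)) K) =
      (vv * c.1 + Qp N2 N3 * c.2.2, vv * c.2.1 + Pp N2 N3 * c.2.2) := by
  rw [p3map, LinearMap.codRestrict_apply, p3raw_apply]

lemma p3map_surj : Function.Surjective (p3map N2 N3) := by
  rintro ⟨⟨g, h⟩, hm⟩
  rw [mem_Lmod_iff] at hm
  rw [mem_span_vv_iff] at hm
  rw [map_sub, map_mul, map_mul, piS_Ftwo N2 N3, piS_Fthree N2 N3] at hm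
  have hcan : Pp N2 N3 * piS g = Qp N2 N3 * piS h := by
    apply mul_left_cancel₀ (Dp_ne_zero N2 N3)
    linear_combination hm
  have hQdvd : Qp N2 N3 ∣ piS g := by
    apply prod_primes_dvd (N3 \ N2) ell2 _ (fun b _ => prime_ell2 b)
      (fun a _ b _ hab => not_dvd_ell2 hab)
    intro b hb
    have h1 : ell2 b ∣ Pp N2 N3 * piS g := by
      rw [hcan]
      exact dvd_mul_of_dvd_left (Finset.dvd_prod_of_mem _ hb) _
    rcases (prime_ell2 b).2.2 _ _ h1 with h2 | h2
    · exfalso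
      obtain ⟨a, ha, h3⟩ := (prime_ell2 b).exists_mem_finset_dvd h2
      have hba : b ≠ a := fun hba =>
        (Finset.mem_sdiff.1 hb).2 (hba ▸ (Finset.mem_sdiff.1 ha).1)
      exact not_dvd_ell2 hba h3
    · exact h2
  obtain ⟨w0, hw0⟩ := hQdvd
  have hg2 : piS g = Qp N2 N3 * piS w0 := by
    have h4 := congrArg piS hw0
    rwa [piS_piS, map_mul, piS_Qp] at h4
  have hh2 : piS h = Pp N2 N3 * piS w0 := by
    apply mul_left_cancel₀ (Qp_ne_zero N2 N3)
    rw [← hcan, hg2]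
    ring
  have hc1 : vv ∣ g - piS w0 * Qp N2 N3 := by
    rw [vv_dvd_iff, map_sub, map_mul, piS_piS, piS_Qp, hg2]
    ring
  have hc2 : vv ∣ h - piS w0 * Pp N2 N3 := by
    rw [vv_dvd_iff, map_sub, map_mul, piS_piS, piS_Pp, hh2]
    ring
  obtain ⟨c1, hc1⟩ := hc1
  obtain ⟨c2, hc2⟩ := hc2
  refine ⟨(c1, c2, piS w0), ?_⟩
  apply Subtype.ext
  rw [p3map_apply]
  exact Prod.ext_iff.2 ⟨by linear_combination hc1.symm, by linear_combination hc2.symm⟩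

lemma p3map_ker {c : MvPolynomial (Option (Fin 3)) K × MvPolynomial (Option (Fin 3)) K ×
    MvPolynomial (Option (Fin 3)) K} (hc : p3map N2 N3 c = 0) :
    ∃ d, c = (-(Qp N2 N3 * d), -(Pp N2 N3 * d), vv * d) := by
  obtain ⟨c1, c2, c3⟩ := c
  have h0 : (p3map N2 N3 (c1, c2, c3) : MvPolynomial (Option (Fin 3)) K ×
      MvPolynomial (Option (Fin 3)) K) = (0, 0) := by rw [hc]; rfl
  rw [p3map_apply] at h0
  have h1 : vv * c1 + Qp N2 N3 * c3 = 0 := congrArg Prod.fst h0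
  have h2 : vv * c2 + Pp N2 N3 * c3 = 0 := congrArg Prod.snd h0
  have h3 : piS c3 = 0 := by
    have h4 := congrArg piS h1
    rw [map_add, map_mul, map_mul, piS_vv, piS_Qp, zero_mul, zero_add, map_zero] at h4
    rcases mul_eq_zero.1 h4 with h5 | h5
    · exact absurd h5 (Qp_ne_zero N2 N3)
    · exact h5
  obtain ⟨d, hd⟩ := (vv_dvd_iff c3).2 h3
  refine ⟨d, ?_⟩
  have hc1' : c1 = -(Qp N2 N3 * d) := by
    apply mul_left_cancel₀ (vv_ne_zero (K := K))
    rw [hd] at h1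
    linear_combination h1
  have hc2' : c2 = -(Pp N2 N3 * d) := by
    apply mul_left_cancel₀ (vv_ne_zero (K := K))
    rw [hd] at h2
    linear_combination h2
  rw [hc1', hc2', hd]

end Main

end ConeIshProof

open ConeIshProof

/-- If N = (N₂, N₃) with N₂ ⊄ N₃ and N₃ ⊄ N₂ (so N is not a nest, ℓ = 3), then the cone
over the N-Ish arrangement in K⁴ (with coordinates x₁ = X (some 0), x₂ = X (some 1),
x₃ = X (some 2), z = X none) is not free. -/
theorem cone_ish_not_free (K : Type*) [Field K] [CharZero K] (N2 N3 : Finset K)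
    (h23 : ¬ N2 ⊆ N3) (h32 : ¬ N3 ⊆ N2) :
    ¬ Module.Free (MvPolynomial (Option (Fin 3)) K)
      (logDer K (coneIsh 2 ![N2, N3])) := by
  classical
  intro hFree
  haveI := hFree
  haveI hproj : Module.Projective (MvPolynomial (Option (Fin 3)) K) (Lmod N2 N3) :=
    Module.Projective.of_split (imap N2 N3) (pmap N2 N3) (pmap_comp_imap N2 N3)
  obtain ⟨sig, hsig⟩ := Module.projective_lifting_property (p3map N2 N3)
    (LinearMap.id (M := Lmod N2 N3)) (p3map_surj N2 N3)
  set Rng := MvPolynomial (Option (Fin 3)) K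
  let Θ : (Rng × Rng × Rng) →ₗ[Rng] (Rng × Rng × Rng) :=
    LinearMap.id - sig.comp (p3map N2 N3)
  have hΘ0 : ∀ y, p3map N2 N3 (Θ y) = 0 := by
    intro y
    have h5 := LinearMap.congr_fun hsig (p3map N2 N3 y)
    rw [LinearMap.comp_apply, LinearMap.id_apply] at h5
    show p3map N2 N3 (y - sig (p3map N2 N3 y)) = 0
    rw [map_sub, h5, sub_self]
  obtain ⟨d1, hd1⟩ := p3map_ker N2 N3 (hΘ0 (1, 0, 0))
  obtain ⟨d2, hd2⟩ := p3map_ker N2 N3 (hΘ0 (0, 1, 0))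
  obtain ⟨d3, hd3⟩ := p3map_ker N2 N3 (hΘ0 (0, 0, 1))
  set r : Rng × Rng × Rng := (-(Qp N2 N3), -(Pp N2 N3), (vv : Rng)) with hrdef
  have hr0 : p3map N2 N3 r = 0 := by
    apply Subtype.ext
    rw [p3map_apply]
    show ((vv * -(Qp N2 N3) + Qp N2 N3 * vv : Rng),
      (vv * -(Pp N2 N3) + Pp N2 N3 * vv : Rng)) = ((0 : Rng), (0 : Rng))
    exact Prod.ext_iff.2 ⟨by ring, by ring⟩
  have hΘr : Θ r = r := by
    show r - sig (p3map N2 N3 r) = r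
    rw [hr0, map_zero, sub_zero]
  have hdec : r = -(Qp N2 N3) • ((1 : Rng), (0 : Rng), (0 : Rng)) +
      (-(Pp N2 N3)) • ((0 : Rng), (1 : Rng), (0 : Rng)) +
      (vv : Rng) • ((0 : Rng), (0 : Rng), (1 : Rng)) := by
    refine Prod.ext_iff.2 ⟨?_, Prod.ext_iff.2 ⟨?_, ?_⟩⟩ <;>
      simp [hrdef, Prod.fst_add, Prod.snd_add, Prod.smul_fst, Prod.smul_snd, smul_eq_mul]
  have hcomb : r = -(Qp N2 N3) • Θ ((1 : Rng), (0 : Rng), (0 : Rng)) +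
      (-(Pp N2 N3)) • Θ ((0 : Rng), (1 : Rng), (0 : Rng)) +
      (vv : Rng) • Θ ((0 : Rng), (0 : Rng), (1 : Rng)) := by
    conv_lhs => rw [← hΘr, hdec]
    rw [map_add, map_add, map_smul, map_smul, map_smul]
  rw [hd1, hd2, hd3] at hcomb
  have h3rd := congrArg (fun t : Rng × Rng × Rng => t.2.2) hcomb
  simp only [Prod.snd_add, Prod.smul_snd, smul_eq_mul, hrdef] at h3rd
  have hone : (1 : Rng) = -(Qp N2 N3) * d1 + -(Pp N2 N3) * d2 + vv * d3 := by
    apply mul_left_cancel₀ (vv_ne_zero (K := K))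
    rw [mul_one]
    linear_combination h3rd
  have hcc := congrArg constantCoeff hone
  rw [map_one, map_add, map_add, map_mul, map_mul, map_mul, map_neg, map_neg,
    constantCoeff_Pp N2 N3 h23, constantCoeff_Qp N2 N3 h32, constantCoeff_vv] at hcc
  simp at hcc

end
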